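/- For odd n ≥ 4 and integer λ with 1 ≤ λ+4 ≤ n, every row sum and every column sum of the vector E_{n,λ} = P_{n,λ} + Q_{n,λ} is zero; i.e., for each ℓ ∈ [n], ∑_{j=1}^n E_{n,λ}(ℓ,j) = 0 and ∑_{i=1}^n E_{n,λ}(i,ℓ) = 0. -/
import Mathlib


open Finset Matrix

/-- The vector `P_{n,λ}`; the vertex `v : Fin n × Fin n` has 1-based coordinates
`(i, j) = (v.1 + 1, v.2 + 1)`, `i ⊖ j = |i - j|`, `i ⊕ j = |i + j - (n+1)|`, and
`k = (λ + 4) - (n-1)/2`. -/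
noncomputable def Pvec (n : ℕ) (lam : ℤ) (v : Fin n × Fin n) : ℝ :=
  let i : ℤ := (v.1 : ℤ) + 1
  let j : ℤ := (v.2 : ℤ) + 1
  let k : ℤ := (lam + 4) - ((n : ℤ) - 1) / 2
  if |i - j| = (n : ℤ) - (lam + 4) then (k : ℝ)
  else if |i - j| < (n : ℤ) - (lam + 4) ∧ |i + j - ((n : ℤ) + 1)| < lam + 4 ∧
      |i - j| % 2 = ((n : ℤ) - (lam + 4)) % 2 then 1
  else 0

/-- The vector `Q_{n,λ}`. -/
noncomputable def Qvec (n : ℕ) (lam : ℤ) (v : Fin n × Fin n) : ℝ :=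
  let i : ℤ := (v.1 : ℤ) + 1
  let j : ℤ := (v.2 : ℤ) + 1
  let k : ℤ := (lam + 4) - ((n : ℤ) - 1) / 2
  if |i + j - ((n : ℤ) + 1)| = (n : ℤ) - (lam + 4) then (-k : ℝ)
  else if |i + j - ((n : ℤ) + 1)| < (n : ℤ) - (lam + 4) ∧ |i - j| < lam + 4 ∧
      |i + j - ((n : ℤ) + 1)| % 2 = ((n : ℤ) - (lam + 4)) % 2 then -1
  else 0

/-- The vector `E_{n,λ} = P_{n,λ} + Q_{n,λ}`. -/
noncomputable def Evec (n : ℕ) (lam : ℤ) (v : Fin n × Fin n) : ℝ :=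
  Pvec n lam v + Qvec n lam v

lemma rev_coe {n : ℕ} (i : Fin n) : ((i.rev : Fin n) : ℤ) = (n : ℤ) - 1 - (i : ℤ) := by
  have h := i.isLt
  rw [Fin.val_rev]
  omega

lemma Qvec_eq (n : ℕ) (lam : ℤ) (i j : Fin n) :
    Qvec n lam (i, j) = -Pvec n lam (i.rev, j) := by
  simp only [Pvec, Qvec]
  have e1 : |((i.rev : Fin n) : ℤ) + 1 - ((j : ℤ) + 1)|
      = |((i : ℤ) + 1) + ((j : ℤ) + 1) - ((n : ℤ) + 1)| := by
    rw [show ((i.rev : Fin n) : ℤ) + 1 - ((j : ℤ) + 1)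
        = -(((i : ℤ) + 1) + ((j : ℤ) + 1) - ((n : ℤ) + 1)) by rw [rev_coe]; ring, abs_neg]
  have e2 : |((i.rev : Fin n) : ℤ) + 1 + ((j : ℤ) + 1) - ((n : ℤ) + 1)|
      = |((i : ℤ) + 1) - ((j : ℤ) + 1)| := by
    rw [show ((i.rev : Fin n) : ℤ) + 1 + ((j : ℤ) + 1) - ((n : ℤ) + 1)
        = -(((i : ℤ) + 1) - ((j : ℤ) + 1)) by rw [rev_coe]; ring, abs_neg]
  rw [e1, e2]
  split_ifs <;> simp

lemma Pvec_rev (n : ℕ) (lam : ℤ) (i j : Fin n) :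
    Pvec n lam (i.rev, j.rev) = Pvec n lam (i, j) := by
  simp only [Pvec]
  have e1 : |((i.rev : Fin n) : ℤ) + 1 - (((j.rev : Fin n) : ℤ) + 1)|
      = |((i : ℤ) + 1) - ((j : ℤ) + 1)| := by
    rw [show ((i.rev : Fin n) : ℤ) + 1 - (((j.rev : Fin n) : ℤ) + 1)
        = -(((i : ℤ) + 1) - ((j : ℤ) + 1)) by rw [rev_coe, rev_coe]; ring, abs_neg]
  have e2 : |((i.rev : Fin n) : ℤ) + 1 + (((j.rev : Fin n) : ℤ) + 1) - ((n : ℤ) + 1)|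
      = |((i : ℤ) + 1) + ((j : ℤ) + 1) - ((n : ℤ) + 1)| := by
    rw [show ((i.rev : Fin n) : ℤ) + 1 + (((j.rev : Fin n) : ℤ) + 1) - ((n : ℤ) + 1)
        = -(((i : ℤ) + 1) + ((j : ℤ) + 1) - ((n : ℤ) + 1)) by rw [rev_coe, rev_coe]; ring,
      abs_neg]
  rw [e1, e2]

/-- every row sum and every column sum of `E_{n,λ}` is zero. -/
theorem stmt2 (n : ℕ) (hn : 4 ≤ n) (hodd : Odd n) (lam : ℤ)
    (h1 : 1 ≤ lam + 4) (h2 : lam + 4 ≤ (n : ℤ)) (l : Fin n) :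
    (∑ j : Fin n, Evec n lam (l, j)) = 0 ∧ (∑ i : Fin n, Evec n lam (i, l)) = 0 := by
  constructor
  · have hsum : ∑ j : Fin n, Pvec n lam (l.rev, j) = ∑ j : Fin n, Pvec n lam (l, j) := by
      refine Fintype.sum_equiv Fin.revPerm _ _ (fun x => ?_)
      rw [show Pvec n lam (l.rev, x) = Pvec n lam (l.rev, x.rev.rev) by rw [Fin.rev_rev],
        Pvec_rev]
      rfl
    simp only [Evec, Qvec_eq, Finset.sum_add_distrib]
    rw [Finset.sum_neg_distrib, hsum]
    ring
  · have hsum : ∑ i : Fin n, Pvec n lam (i.rev, l) = ∑ i : Fin n, Pvec n lam (i, l) := by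
      exact Fintype.sum_equiv Fin.revPerm _ _ (fun i => rfl)
    simp only [Evec, Qvec_eq, Finset.sum_add_distrib]
    rw [Finset.sum_neg_distrib, hsum]
    ring
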